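/- Let θ₀ = inf{θ ∈ (0, π/2) : ∂N_θ ∩ Cat = ∅}, where Cat = {x ∈ ℝ³ : cosh²(x₃) = x₁² + x₂²} and ∂N_θ = {x ∈ ℝ³ : x₃² = |x|²·sin²θ}. Then 0 < θ₀ < π/4, the cone ∂N_{θ₀} intersects Cat, and for every θ with θ₀ < θ < π/2 the cone ∂N_θ is disjoint from Cat. -/

import Mathlib

open Real Set

abbrev R3 := EuclideanSpace ℝ (Fin 3)

/-- The standard vertical catenoid centered at the origin. -/
def Cat : Set R3 := {x | Real.cosh (x 2) ^ 2 = x 0 ^ 2 + x 1 ^ 2}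

/-- The double cone `∂N_θ` of angle `θ` about the horizontal plane through the origin. -/
def coneBdry (θ : ℝ) : Set R3 := {x | (x 2) ^ 2 = ‖x‖ ^ 2 * Real.sin θ ^ 2}

/-- The critical angle: the infimum of angles `θ ∈ (0, π/2)` for which the cone
`∂N_θ` is disjoint from the catenoid. -/
noncomputable def θ₀ : ℝ := sInf {θ | θ ∈ Ioo 0 (π / 2) ∧ coneBdry θ ∩ Cat = ∅}

/-- The profile function `t ↦ t / cosh t`. -/
noncomputable def fCat (t : ℝ) : ℝ := t / Real.cosh t

lemma fCat_continuous : Continuous fCat :=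
  continuous_id.div Real.continuous_cosh fun t => (Real.cosh_pos t).ne'

lemma fCat_nonneg {t : ℝ} (ht : 0 ≤ t) : 0 ≤ fCat t :=
  div_nonneg ht (Real.cosh_pos t).le

lemma self_lt_cosh (t : ℝ) : t < Real.cosh t := by
  rcases le_or_gt t 0 with h | h
  · exact lt_of_le_of_lt h (Real.cosh_pos t)
  · have h1 : t < Real.sinh t := Real.self_lt_sinh_iff.mpr h
    have h2 : Real.sinh t < Real.cosh t := by
      have := Real.exp_pos (-t)
      rw [Real.sinh_eq, Real.cosh_eq]
      linarith
    linarith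

lemma fCat_lt_one (t : ℝ) : fCat t < 1 := by
  rw [fCat, div_lt_one (Real.cosh_pos t)]
  exact self_lt_cosh t

lemma cosh_one_lt_two : Real.cosh 1 < 2 := by
  have h1 : Real.exp 1 < 2.7182818286 := Real.exp_one_lt_d9
  have h2 : Real.exp (-1) < 1 := by
    rw [Real.exp_lt_one_iff]; norm_num
  rw [Real.cosh_eq]
  linarith

lemma cube_le_exp {t : ℝ} (ht : 0 ≤ t) : t ^ 3 / 27 ≤ Real.exp t := by
  have h1 : t / 3 + 1 ≤ Real.exp (t / 3) := by
    have := Real.add_one_le_exp (t / 3); linarith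
  have h2 : (t / 3) ^ 3 ≤ (t / 3 + 1) ^ 3 := by
    apply pow_le_pow_left₀ (by positivity); linarith
  have h3 : (t / 3 + 1) ^ 3 ≤ Real.exp (t / 3) ^ 3 := by
    apply pow_le_pow_left₀ (by positivity) h1
  have h4 : Real.exp (t / 3) ^ 3 = Real.exp t := by
    rw [← Real.exp_nat_mul]; congr 1; push_cast; ring
  calc t ^ 3 / 27 = (t / 3) ^ 3 := by ring
    _ ≤ (t / 3 + 1) ^ 3 := h2
    _ ≤ Real.exp (t / 3) ^ 3 := h3
    _ = Real.exp t := h4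

lemma fCat_small {t : ℝ} (ht : 11 ≤ t) : fCat t < fCat 1 := by
  have ht0 : (0 : ℝ) < t := by linarith
  have hc : t ^ 3 / 54 ≤ Real.cosh t := by
    have h1 := cube_le_exp ht0.le
    have h2 : Real.exp t / 2 ≤ Real.cosh t := by
      have := Real.exp_pos (-t)
      rw [Real.cosh_eq]; linarith
    linarith
  have hcpos : (0 : ℝ) < t ^ 3 / 54 := by positivity
  have h3 : fCat t ≤ 54 / t ^ 2 := by
    rw [fCat, div_le_div_iff₀ (Real.cosh_pos t) (by positivity)]
    nlinarith [Real.cosh_pos t]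
  have h4 : 54 / t ^ 2 ≤ 54 / 121 := by
    apply div_le_div_of_nonneg_left (by norm_num) (by norm_num)
    nlinarith
  have h5 : fCat 1 = 1 / Real.cosh 1 := by rw [fCat]
  have h6 : (54 : ℝ) / 121 < 1 / Real.cosh 1 := by
    rw [div_lt_div_iff₀ (by norm_num) (Real.cosh_pos 1)]
    nlinarith [cosh_one_lt_two, Real.cosh_pos 1]
  linarith

lemma exists_fCat_max : ∃ t₀, 0 ≤ t₀ ∧ ∀ t, 0 ≤ t → fCat t ≤ fCat t₀ := by
  obtain ⟨t₀, ht₀mem, hmax⟩ :=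
    (isCompact_Icc (a := (0:ℝ)) (b := 11)).exists_isMaxOn (by norm_num)
      fCat_continuous.continuousOn
  refine ⟨t₀, ht₀mem.1, fun t ht => ?_⟩
  rcases le_or_gt t 11 with h | h
  · exact hmax ⟨ht, h⟩
  · have h1 : fCat t < fCat 1 := fCat_small h.le
    have h2 : fCat 1 ≤ fCat t₀ := hmax (by norm_num)
    linarith

/-- Characterization: the cone of angle `θ ∈ (0, π/2)` meets the catenoid iff
`tan θ` is a value of `fCat` on `[0, ∞)`. -/
lemma inter_nonempty_iff {θ : ℝ} (h0 : 0 < θ) (h2 : θ < π / 2) :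
    (coneBdry θ ∩ Cat).Nonempty ↔ ∃ t, 0 ≤ t ∧ Real.tan θ = fCat t := by
  have hcos : 0 < Real.cos θ := Real.cos_pos_of_mem_Ioo ⟨by linarith [Real.pi_pos], h2⟩
  have hsin : 0 < Real.sin θ := Real.sin_pos_of_pos_of_lt_pi h0 (by linarith [Real.pi_pos])
  have hpyth := Real.sin_sq_add_cos_sq θ
  constructor
  · rintro ⟨x, hc, hcat⟩
    rw [coneBdry, mem_setOf_eq] at hc
    rw [Cat, mem_setOf_eq] at hcat
    have hn : ‖x‖ ^ 2 = x 0 ^ 2 + x 1 ^ 2 + x 2 ^ 2 := by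
      rw [EuclideanSpace.norm_eq, Real.sq_sqrt (by positivity)]
      simp [Fin.sum_univ_three, sq_abs]
    have key : (x 2) ^ 2 * Real.cos θ ^ 2 = Real.cosh (x 2) ^ 2 * Real.sin θ ^ 2 := by
      nlinarith [hc, hcat, hn]
    have key2 : (|x 2| * Real.cos θ) ^ 2 = (Real.cosh (x 2) * Real.sin θ) ^ 2 := by
      rw [mul_pow, mul_pow, sq_abs]; exact key
    have key3 : |x 2| * Real.cos θ = Real.cosh (x 2) * Real.sin θ := by
      have ha : 0 ≤ |x 2| * Real.cos θ := by positivity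
      have hb : 0 ≤ Real.cosh (x 2) * Real.sin θ := by positivity
      have h := (sq_eq_sq_iff_abs_eq_abs _ _).mp key2
      rwa [abs_of_nonneg ha, abs_of_nonneg hb] at h
    refine ⟨|x 2|, abs_nonneg _, ?_⟩
    rw [Real.tan_eq_sin_div_cos, fCat, Real.cosh_abs,
      div_eq_div_iff hcos.ne' (Real.cosh_pos _).ne']
    linarith [key3]
  · rintro ⟨t, ht, htan⟩
    rw [Real.tan_eq_sin_div_cos, fCat,
      div_eq_div_iff hcos.ne' (Real.cosh_pos _).ne'] at htan
    refine ⟨(WithLp.equiv 2 (Fin 3 → ℝ)).symm ![Real.cosh t, 0, t], ?_, ?_⟩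
    · rw [coneBdry, mem_setOf_eq]
      have hn : ‖(WithLp.equiv 2 (Fin 3 → ℝ)).symm ![Real.cosh t, 0, t]‖ ^ 2
          = Real.cosh t ^ 2 + t ^ 2 := by
        rw [EuclideanSpace.norm_eq, Real.sq_sqrt (by positivity)]
        simp [Fin.sum_univ_three, sq_abs]
      rw [hn]
      simp only [WithLp.equiv_symm_apply, PiLp.toLp_apply, Matrix.cons_val_two, Matrix.tail_cons,
        Matrix.head_cons]
      have hsq : (Real.sin θ * Real.cosh t) ^ 2 = (t * Real.cos θ) ^ 2 := by
        rw [htan]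
      nlinarith [hsq, hpyth]
    · rw [Cat, mem_setOf_eq]
      simp [WithLp.equiv_symm_apply, PiLp.toLp_apply]

lemma the_set_eq {t₀ : ℝ} (ht₀ : 0 ≤ t₀) (hmax : ∀ t, 0 ≤ t → fCat t ≤ fCat t₀)
    (hM0 : 0 < fCat t₀) :
    {θ | θ ∈ Ioo 0 (π / 2) ∧ coneBdry θ ∩ Cat = ∅}
      = Ioo (Real.arctan (fCat t₀)) (π / 2) := by
  set M := fCat t₀ with hM
  have harc0 : 0 < Real.arctan M := by rw [← Real.arctan_zero]; exact Real.arctan_strictMono hM0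
  have harc2 : Real.arctan M < π / 2 := Real.arctan_lt_pi_div_two M
  ext θ
  simp only [mem_setOf_eq, mem_Ioo]
  constructor
  · rintro ⟨⟨h0, h2⟩, hempty⟩
    refine ⟨?_, h2⟩
    by_contra hle
    push_neg at hle
    -- then tan θ ≤ M, tan θ > 0, so tan θ is attained, contradiction
    have htle : Real.tan θ ≤ M := by
      have := Real.tan_arctan M
      calc Real.tan θ ≤ Real.tan (Real.arctan M) :=
            Real.strictMonoOn_tan.monotoneOn ⟨by linarith [Real.pi_pos], h2⟩
              (Real.arctan_mem_Ioo M) hle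
        _ = M := this
    have htpos : 0 < Real.tan θ := Real.tan_pos_of_pos_of_lt_pi_div_two h0 h2
    -- IVT to find t with fCat t = tan θ
    have hsub : Icc (fCat 0) (fCat t₀) ⊆ fCat '' Icc 0 t₀ :=
      intermediate_value_Icc ht₀ fCat_continuous.continuousOn
    have h0f : fCat 0 = 0 := by simp [fCat]
    obtain ⟨t, htmem, hft⟩ := hsub ⟨by rw [h0f]; exact htpos.le, htle⟩
    have : (coneBdry θ ∩ Cat).Nonempty :=
      (inter_nonempty_iff h0 h2).mpr ⟨t, htmem.1, hft.symm⟩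
    rw [hempty] at this
    exact this.ne_empty rfl
  · rintro ⟨h1, h2⟩
    have h0 : 0 < θ := lt_trans harc0 h1
    refine ⟨⟨h0, h2⟩, ?_⟩
    rw [← not_nonempty_iff_eq_empty]
    rw [inter_nonempty_iff h0 h2]
    rintro ⟨t, ht, htan⟩
    have hMlt : M < Real.tan θ := by
      have := Real.tan_arctan M
      calc M = Real.tan (Real.arctan M) := this.symm
        _ < Real.tan θ := Real.strictMonoOn_tan (Real.arctan_mem_Ioo M)
              ⟨by linarith [Real.pi_pos], h2⟩ h1
    have : fCat t ≤ M := hmax t ht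
    linarith

/-- `0 < θ₀ < π/4`, the cone `∂N_{θ₀}` meets the catenoid, and for every
`θ₀ < θ < π/2` the cone `∂N_θ` is disjoint from the catenoid. -/
theorem stmt1 :
    0 < θ₀ ∧ θ₀ < π / 4 ∧ (coneBdry θ₀ ∩ Cat).Nonempty ∧
      ∀ θ : ℝ, θ₀ < θ → θ < π / 2 → coneBdry θ ∩ Cat = ∅ := by
  obtain ⟨t₀, ht₀, hmax⟩ := exists_fCat_max
  set M := fCat t₀ with hM
  have hM0 : 0 < M := by
    have h1 : fCat 1 ≤ M := hmax 1 zero_le_one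
    have h2 : 0 < fCat 1 := by
      rw [fCat]; positivity
    linarith
  have hM1 : M < 1 := fCat_lt_one t₀
  have hset := the_set_eq ht₀ hmax hM0
  have hθ₀ : θ₀ = Real.arctan M := by
    rw [θ₀, hset, csInf_Ioo (Real.arctan_lt_pi_div_two M)]
  have harc0 : 0 < Real.arctan M := by rw [← Real.arctan_zero]; exact Real.arctan_strictMono hM0
  have harc2 : Real.arctan M < π / 2 := Real.arctan_lt_pi_div_two M
  refine ⟨by rw [hθ₀]; exact harc0, ?_, ?_, ?_⟩
  · rw [hθ₀, ← Real.arctan_one]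
    exact Real.arctan_strictMono hM1
  · rw [hθ₀]
    exact (inter_nonempty_iff harc0 harc2).mpr ⟨t₀, ht₀, Real.tan_arctan M⟩
  · intro θ hθ1 hθ2
    rw [hθ₀] at hθ1
    have : θ ∈ Ioo (Real.arctan M) (π / 2) := ⟨hθ1, hθ2⟩
    rw [← hset] at this
    exact this.2
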